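/- arXiv:1001.4095 — 2 statements merged into one kernel-verified Lean document; each statement's English description precedes it below -/
import Mathlib

section
/- Let G be a finite abelian group generated by two elements, with order R and exponent e, and suppose R divides a positive integer h. Then R/e divides gcd(e, h/e). In particular, if gcd(e, h/e) = 1, then R = e. -/
theorem stmt_5 (G : Type*) [CommGroup G] [Finite G]
    (x y : G) (hgen : Subgroup.closure {x, y} = ⊤)
    (R e h : ℕ) (hR : R = Nat.card G) (he : e = Monoid.exponent G)
    (hpos : 0 < h) (hdvd : R ∣ h) :
    R / e ∣ Nat.gcd e (h / e) ∧ (Nat.gcd e (h / e) = 1 → R = e) := by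
  have hepos : 0 < e := by
    rw [he]; exact Monoid.ExponentExists.exponent_pos (Monoid.ExponentExists.of_finite)
  have heR : e ∣ R := by rw [he, hR]; exact Group.exponent_dvd_nat_card
  -- build a surjective hom from ZMod e × ZMod e onto Additive G
  have hxe : (zmultiplesHom (Additive G) (Additive.ofMul x)) (e : ℤ) = 0 := by
    simp [he, Monoid.pow_exponent_eq_one, ← ofMul_pow]
  have hye : (zmultiplesHom (Additive G) (Additive.ofMul y)) (e : ℤ) = 0 := by
    simp [he, Monoid.pow_exponent_eq_one, ← ofMul_pow]
  set F : ZMod e × ZMod e →+ Additive G :=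
    (ZMod.lift e ⟨_, hxe⟩).coprod (ZMod.lift e ⟨_, hye⟩) with hF
  have hone : (1 : ZMod e) = ((1 : ℤ) : ZMod e) := by push_cast; ring
  have hxmem : Additive.ofMul x ∈ F.range := ⟨(1, 0), by
    simp only [hF, AddMonoidHom.coprod_apply, map_zero, add_zero, hone, ZMod.lift_coe]
    simp⟩
  have hymem : Additive.ofMul y ∈ F.range := ⟨(0, 1), by
    simp only [hF, AddMonoidHom.coprod_apply, map_zero, zero_add, hone, ZMod.lift_coe]
    simp⟩
  have key : ∀ g : G, Additive.ofMul g ∈ F.range := by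
    intro g
    have hg : g ∈ Subgroup.closure ({x, y} : Set G) := hgen ▸ Subgroup.mem_top _
    refine Subgroup.closure_induction ?_ ?_ ?_ ?_ hg
    · rintro z (rfl | rfl)
      · exact hxmem
      · exact hymem
    · exact ⟨0, by simp⟩
    · rintro a b _ _ ⟨u, hu⟩ ⟨v, hv⟩
      exact ⟨u + v, by rw [map_add, hu, hv]; rfl⟩
    · rintro a _ ⟨u, hu⟩
      exact ⟨-u, by rw [map_neg, hu]; rfl⟩
  have hsurj : Function.Surjective F := fun g => key (Additive.toMul g)
  have hcard : R ∣ e * e := by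
    have := AddSubgroup.card_dvd_of_surjective F hsurj
    simpa [hR, Nat.card_prod, Nat.card_zmod, Nat.card_eq_fintype_card,
      (Nat.card_congr (Additive.ofMul : G ≃ Additive G)).symm] using this
  obtain ⟨a, ha⟩ := heR
  have hae : a ∣ e := by
    have : e * a ∣ e * e := ha ▸ hcard
    exact (mul_dvd_mul_iff_left hepos.ne').mp this
  have hah : a ∣ h / e := by
    obtain ⟨k, hk⟩ := hdvd
    refine ⟨k, ?_⟩
    have : h = e * (a * k) := by rw [hk, ha]; ring
    rw [this, Nat.mul_div_cancel_left _ hepos]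
  have hRe : R / e = a := by rw [ha, Nat.mul_div_cancel_left _ hepos]
  refine ⟨hRe ▸ Nat.dvd_gcd hae hah, fun hg => ?_⟩
  have : a = 1 := Nat.eq_one_of_dvd_one (hg ▸ Nat.dvd_gcd hae hah)
  rw [ha, this, mul_one]
end

section
/- Let n be a positive integer whose prime factorization is n = ∏ p_i^{a_i}, and let e be a positive divisor of n. Define h* = ∏ p_i^{e_i − 1}, where for each i, e_i is the minimal integer in [1, a_i] such that e does not divide n/p_i^{e_i}, with the convention e_i − 1 = a_i when e divides n/p_i^{a_i}. Then n / h* = e. -/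
theorem stmt_16 (n e : ℕ) (hn : 0 < n) (he : 0 < e) (hdvd : e ∣ n)
    (f : ℕ → ℕ)
    (hf : ∀ p ∈ n.primeFactors,
      if e ∣ n / p ^ (n.factorization p) then f p = n.factorization p + 1
      else IsLeast {k : ℕ | 1 ≤ k ∧ k ≤ n.factorization p ∧ ¬ e ∣ n / p ^ k} (f p)) :
    n / (∏ p ∈ n.primeFactors, p ^ (f p - 1)) = e := by
  have hne : n ≠ 0 := hn.ne'
  have hee : e ≠ 0 := he.ne'
  have key : ∀ p ∈ n.primeFactors, f p - 1 = n.factorization p - e.factorization p := by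
    intro p hp
    have hpp : p.Prime := Nat.prime_of_mem_primeFactors hp
    have hepn : e.factorization p ≤ n.factorization p :=
      (Nat.factorization_le_iff_dvd hee hne).2 hdvd p
    have hdvdk : ∀ k, k ≤ n.factorization p →
        (e ∣ n / p ^ k ↔ e.factorization p ≤ n.factorization p - k) := by
      intro k hk
      have hpk : p ^ k ∣ n := (Nat.Prime.pow_dvd_iff_le_factorization hpp hne).2 hk
      have hm0 : n / p ^ k ≠ 0 := by
        have := Nat.le_of_dvd hn hpk
        exact Nat.div_ne_zero_iff.2 ⟨pow_ne_zero _ hpp.ne_zero, this⟩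
      rw [← Nat.factorization_le_iff_dvd hee hm0, Nat.factorization_div hpk]
      constructor
      · intro h
        have := h p
        simpa [hpp.factorization, Finsupp.single_apply] using this
      · intro h q
        rcases eq_or_ne q p with rfl | hqp
        · simpa [hpp.factorization, Finsupp.single_apply] using h
        · have hq : e.factorization q ≤ n.factorization q :=
            (Nat.factorization_le_iff_dvd hee hne).2 hdvd q
          simp only [Nat.factorization_pow, hpp.factorization, Finsupp.tsub_apply,
            Finsupp.smul_apply, Finsupp.single_apply]
          rw [if_neg (fun h' => hqp h'.symm)]
          simpa using hq
    have := hf p hp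
    split_ifs at this with h
    · have h0 : e.factorization p = 0 := by
        have := (hdvdk (n.factorization p) le_rfl).1 h
        omega
      omega
    · have h1 : 1 ≤ e.factorization p := by
        have := (hdvdk (n.factorization p) le_rfl)
        rw [this] at h
        omega
      have hleast : IsLeast {k : ℕ | 1 ≤ k ∧ k ≤ n.factorization p ∧ ¬ e ∣ n / p ^ k}
          (n.factorization p - e.factorization p + 1) := by
        constructor
        · refine ⟨by omega, by omega, ?_⟩
          rw [hdvdk _ (by omega)]
          omega
        · rintro k ⟨hk1, hk2, hk3⟩
          rw [hdvdk _ hk2] at hk3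
          omega
      have := this.unique hleast
      omega
  rw [Finset.prod_congr rfl (fun p hp => by rw [key p hp])]
  have hq0 : n / e ≠ 0 := Nat.div_ne_zero_iff.2 ⟨hee, Nat.le_of_dvd hn hdvd⟩
  have hprod : ∏ p ∈ n.primeFactors, p ^ (n.factorization p - e.factorization p) = n / e := by
    have hfac : (n / e).factorization = n.factorization - e.factorization :=
      Nat.factorization_div hdvd
    have hsub : (n / e).primeFactors ⊆ n.primeFactors :=
      Nat.primeFactors_mono (Nat.div_dvd_of_dvd hdvd) hne
    have := Nat.factorization_prod_pow_eq_self hq0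
    rw [Finsupp.prod] at this
    rw [← this, Nat.support_factorization]
    refine (Finset.prod_subset hsub ?_).symm.trans (Finset.prod_congr rfl ?_)
    · intro p hp hnp
      have : (n / e).factorization p = 0 := by
        rw [← Nat.support_factorization] at hnp
        exact Finsupp.notMem_support_iff.1 (by rwa [Nat.support_factorization])
      rw [hfac] at this
      simp only [Finsupp.tsub_apply] at this
      rw [this, pow_zero]
    · intro p hp
      rw [hfac]
      simp [Finsupp.tsub_apply]
  rw [hprod, Nat.div_div_self hdvd hne]
end
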